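/- Let z₁, z₂, z₃ be three distinct, noncollinear points in the complex plane and let L₁, L₂, L₃ be the line segments joining z₂ and z₃, z₁ and z₃, and z₁ and z₂ respectively. Suppose E₀ is an ellipse, not a circle, tangent to L₁, L₂, and L₃, with foci Z₁ and Z₂. Then there exist real numbers t₁, t₂, t₃ with t₁t₂t₃ > 0 and t₁ + t₂ + t₃ = 1 such that the function F(z) = t₁/(z − z₁) + t₂/(z − z₂) + t₃/(z − z₃) has zeros exactly Z₁ and Z₂. -/

import Mathlib

open Complex ComplexConjugate


open Set

noncomputable section

/-- Points of the ellipse with foci `f₁`, `f₂` and major-axis length `2*a`. -/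
def EllipseSet (f₁ f₂ : ℂ) (a : ℝ) : Set ℂ := {z : ℂ | dist z f₁ + dist z f₂ = 2 * a}

/-- `E` is the (possibly circular) ellipse with foci `f₁, f₂` and semi-major axis `a`.
It is a circle precisely when `f₁ = f₂`. -/
def IsEllipse (E : Set ℂ) (f₁ f₂ : ℂ) (a : ℝ) : Prop :=
  dist f₁ f₂ < 2 * a ∧ E = EllipseSet f₁ f₂ a

/-- The full line through `P` and `Q`. -/
def LineThrough (P Q : ℂ) : Set ℂ := {z : ℂ | ∃ θ : ℝ, z = P + θ • (Q - P)}

/-- `E` is tangent to the side `[P,Q]` at `ζ`: the line through `P` and `Q` meets `E`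
in the single point `ζ`, which lies on the closed segment `[P,Q]`. -/
def TangentToSideAt (E : Set ℂ) (P Q ζ : ℂ) : Prop :=
  ζ ∈ segment ℝ P Q ∧ E ∩ LineThrough P Q = {ζ}

/-- `E` is tangent to the side `[P,Q]`. -/
def TangentToSide (E : Set ℂ) (P Q : ℂ) : Prop := ∃ ζ, TangentToSideAt E P Q ζ

/-- A curve `E` is inscribed in the quadrilateral `A₁A₂A₃A₄` (vertices in order)
if it is tangent to each of the four sides. -/
def InscribedInQuad (E : Set ℂ) (A₁ A₂ A₃ A₄ : ℂ) : Prop :=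
  TangentToSide E A₁ A₂ ∧ TangentToSide E A₂ A₃ ∧
    TangentToSide E A₃ A₄ ∧ TangentToSide E A₄ A₁

/-- `A₁A₂A₃A₄` is a convex quadrilateral with the vertices listed in cyclic order:
the four points are in convex position and the diagonals `A₁A₃`, `A₂A₄` meet. -/
def IsConvexQuad (A₁ A₂ A₃ A₄ : ℂ) : Prop :=
  A₁ ∉ convexHull ℝ ({A₂, A₃, A₄} : Set ℂ) ∧
  A₂ ∉ convexHull ℝ ({A₁, A₃, A₄} : Set ℂ) ∧
  A₃ ∉ convexHull ℝ ({A₁, A₂, A₄} : Set ℂ) ∧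
  A₄ ∉ convexHull ℝ ({A₁, A₂, A₃} : Set ℂ) ∧
  (segment ℝ A₁ A₃ ∩ segment ℝ A₂ A₄).Nonempty

def IsParallelogram (A₁ A₂ A₃ A₄ : ℂ) : Prop := A₁ + A₃ = A₂ + A₄

/-- The diagonals `A₁A₃` and `A₂A₄` are perpendicular. -/
def Orthodiagonal (A₁ A₂ A₃ A₄ : ℂ) : Prop :=
  (A₃ - A₁).re * (A₄ - A₂).re + (A₃ - A₁).im * (A₄ - A₂).im = 0

/-- `P` is equidistant from the four points (the circumcenter, when they are concyclic). -/
def IsCircCenter (P A₁ A₂ A₃ A₄ : ℂ) : Prop :=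
  dist P A₁ = dist P A₂ ∧ dist P A₂ = dist P A₃ ∧ dist P A₃ = dist P A₄

/-- `P` is the intersection point of the diagonals `A₁A₃` and `A₂A₄`. -/
def IsDiagPoint (P A₁ A₂ A₃ A₄ : ℂ) : Prop :=
  P ∈ segment ℝ A₁ A₃ ∧ P ∈ segment ℝ A₂ A₄

/-- The plane vectors `z` and `w` are parallel. -/
def Para (z w : ℂ) : Prop := z.re * w.im = z.im * w.re

/-- The quadrilateral `A₁A₂A₃A₄` has (at least) one pair of parallel opposite sides. -/
def IsTrapezoid (A₁ A₂ A₃ A₄ : ℂ) : Prop :=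
  Para (A₂ - A₁) (A₄ - A₃) ∨ Para (A₃ - A₂) (A₁ - A₄)

namespace Marden


/-- line through `P` with direction `u`. -/
def pline (P u : ℂ) : Set ℂ := {z : ℂ | ∃ θ : ℝ, z = P + (θ : ℂ) * u}

lemma lineThrough_eq_pline (P Q : ℂ) : LineThrough P Q = pline P (Q - P) := by
  ext z; simp only [LineThrough, pline, mem_setOf_eq, Complex.real_smul]

lemma lineThrough_comm (P Q : ℂ) : LineThrough P Q = LineThrough Q P := by
  ext z
  constructor <;> rintro ⟨θ, rfl⟩
  · exact ⟨1 - θ, by push_cast [Complex.real_smul]; ring_nf⟩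
  · exact ⟨1 - θ, by push_cast [Complex.real_smul]; ring_nf⟩

lemma base_mem_pline (P u : ℂ) : P ∈ pline P u := ⟨0, by simp⟩
lemma tip_mem_pline (P u : ℂ) : P + u ∈ pline P u := ⟨1, by simp⟩

/-- signed side functional of the line. -/
def lam (P u w : ℂ) : ℝ := ((w - P) * conj u).im

lemma lam_base (P u : ℂ) : lam P u P = 0 := by simp [lam]

lemma lam_mem_zero {P u z : ℂ} (hz : z ∈ pline P u) : lam P u z = 0 := by
  obtain ⟨θ, rfl⟩ := hz
  simp only [lam, add_sub_cancel_left]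
  rw [mul_assoc, Complex.mul_conj]
  simp

lemma mem_pline_of_lam {P u w : ℂ} (hu : u ≠ 0) (h : lam P u w = 0) : w ∈ pline P u := by
  refine ⟨((w - P) * conj u).re / Complex.normSq u, ?_⟩
  have h1 : ((w - P) * conj u) = ((((w - P) * conj u).re : ℝ) : ℂ) := by
    apply Complex.ext
    · simp
    · simp only [Complex.ofReal_im]
      simp only [lam, Complex.mul_im] at h ⊢
      linarith
  have hns : (Complex.normSq u : ℂ) ≠ 0 := by
    simpa using (Complex.normSq_pos.mpr hu).ne'
  have h2 : (w - P) * (conj u * u) = ((((w - P) * conj u).re : ℝ) : ℂ) * u := by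
    rw [← mul_assoc, ← h1]
  rw [mul_comm (conj u) u, Complex.mul_conj] at h2
  push_cast
  rw [div_mul_eq_mul_div, ← h2, mul_div_assoc, div_self hns, mul_one]
  ring

lemma lam_combo (P u w₁ w₂ : ℂ) (s t : ℝ) (hst : s + t = 1) :
    lam P u (s • w₁ + t • w₂) = s * lam P u w₁ + t * lam P u w₂ := by
  have h : (s • w₁ + t • w₂ - P) = s • (w₁ - P) + t • (w₂ - P) := by
    push_cast [Complex.real_smul]
    have : ((s : ℂ) + t) = 1 := by exact_mod_cast congrArg (Complex.ofReal) hst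
    linear_combination P * this
  simp only [lam]
  rw [h]
  simp only [Complex.real_smul, add_mul, Complex.add_im, mul_assoc, Complex.mul_im,
    Complex.ofReal_re, Complex.ofReal_im]
  ring


lemma combo_sub (x y Z : ℂ) (s t : ℝ) (hst : s + t = 1) :
    s • x + t • y - Z = s • (x - Z) + t • (y - Z) := by
  push_cast [Complex.real_smul]
  have : ((s : ℂ) + t) = 1 := by exact_mod_cast congrArg (Complex.ofReal) hst
  linear_combination Z * this

lemma dist_combo_le (x y Z : ℂ) {s t : ℝ} (hs : 0 ≤ s) (ht : 0 ≤ t) (hst : s + t = 1) :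
    dist (s • x + t • y) Z ≤ s * dist x Z + t * dist y Z := by
  rw [dist_eq_norm, dist_eq_norm, dist_eq_norm, combo_sub x y Z s t hst]
  calc ‖s • (x - Z) + t • (y - Z)‖ ≤ ‖s • (x - Z)‖ + ‖t • (y - Z)‖ := norm_add_le _ _
    _ = s * ‖x - Z‖ + t * ‖y - Z‖ := by
        rw [norm_smul, norm_smul, Real.norm_of_nonneg hs, Real.norm_of_nonneg ht]

lemma dist_combo_left (x y : ℂ) {s t : ℝ} (ht : 0 ≤ t) (hst : s + t = 1) :
    dist (s • x + t • y) x = t * dist x y := by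
  rw [dist_eq_norm, combo_sub x y x s t hst]
  simp only [sub_self, smul_zero, zero_add]
  rw [norm_smul, Real.norm_of_nonneg ht, dist_eq_norm]
  rw [show y - x = -(x - y) by ring, norm_neg]

lemma dist_combo_right (x y : ℂ) {s t : ℝ} (hs : 0 ≤ s) (hst : s + t = 1) :
    dist (s • x + t • y) y = s * dist x y := by
  rw [dist_eq_norm, combo_sub x y y s t hst]
  simp only [sub_self, smul_zero, add_zero]
  rw [norm_smul, Real.norm_of_nonneg hs, dist_eq_norm]

lemma support {Z₁ Z₂ : ℂ} {a : ℝ} (hd : dist Z₁ Z₂ < 2 * a) {P u ζ : ℂ} (hu : u ≠ 0)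
    (htan : EllipseSet Z₁ Z₂ a ∩ pline P u = {ζ}) :
    ∀ z ∈ pline P u, 2 * a ≤ dist z Z₁ + dist z Z₂ := by
  rintro z ⟨θ₀, rfl⟩
  by_contra hlt
  push_neg at hlt
  set g : ℝ → ℝ := fun θ => dist (P + (θ : ℂ) * u) Z₁ + dist (P + (θ : ℂ) * u) Z₂ with hg
  have hgc : Continuous g := by fun_prop
  have hun : 0 < ‖u‖ := norm_pos_iff.mpr hu
  have hgrow : ∀ θ : ℝ, 2 * a + dist P Z₁ ≤ |θ| * ‖u‖ → 2 * a ≤ g θ := by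
    intro θ h
    have h0 : dist (P + (θ : ℂ) * u) P = |θ| * ‖u‖ := by
      rw [dist_eq_norm, add_sub_cancel_left, norm_mul, Complex.norm_real, Real.norm_eq_abs]
    have h1 : dist (P + (θ : ℂ) * u) P ≤ dist (P + (θ : ℂ) * u) Z₁ + dist Z₁ P :=
      dist_triangle _ _ _
    have h2 : (0:ℝ) ≤ dist (P + (θ : ℂ) * u) Z₂ := dist_nonneg
    have h3 : dist Z₁ P = dist P Z₁ := dist_comm _ _
    simp only [hg]
    linarith [h0 ▸ h1]
  have ha0 : (0:ℝ) ≤ 2 * a + dist P Z₁ := by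
    have := dist_nonneg (x := Z₁) (y := Z₂); have := dist_nonneg (x := P) (y := Z₁); linarith
  set R : ℝ := (2 * a + dist P Z₁) / ‖u‖ + 1 with hR
  have hRpos : 0 < R := by positivity
  have hRbig : 2 * a + dist P Z₁ ≤ R * ‖u‖ := by
    rw [hR, add_mul, div_mul_cancel₀ _ hun.ne', one_mul]
    linarith
  -- right crossing
  have hplus : ∃ θp ∈ Icc θ₀ (|θ₀| + R), g θp = 2 * a := by
    have h1 : θ₀ ≤ |θ₀| + R := by have := le_abs_self θ₀; linarith
    have h2 : (2:ℝ) * a ∈ Icc (g θ₀) (g (|θ₀| + R)) := by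
      constructor
      · exact le_of_lt hlt
      · apply hgrow
        rw [_root_.abs_of_nonneg (by positivity : (0:ℝ) ≤ |θ₀| + R)]
        have : R * ‖u‖ ≤ (|θ₀| + R) * ‖u‖ := by nlinarith [abs_nonneg θ₀]
        linarith
    obtain ⟨θp, hmem, hval⟩ := intermediate_value_Icc h1 hgc.continuousOn h2
    exact ⟨θp, hmem, hval⟩
  have hminus : ∃ θm ∈ Icc (-(|θ₀| + R)) θ₀, g θm = 2 * a := by
    have h1 : -(|θ₀| + R) ≤ θ₀ := by have := neg_abs_le θ₀; linarith
    have h2 : (2:ℝ) * a ∈ Icc (g θ₀) (g (-(|θ₀| + R))) := by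
      constructor
      · exact le_of_lt hlt
      · apply hgrow
        rw [abs_neg, _root_.abs_of_nonneg (by positivity : (0:ℝ) ≤ |θ₀| + R)]
        have : R * ‖u‖ ≤ (|θ₀| + R) * ‖u‖ := by nlinarith [abs_nonneg θ₀]
        linarith
    obtain ⟨θm, hmem, hval⟩ := intermediate_value_Icc' h1 hgc.continuousOn h2
    exact ⟨θm, hmem, hval⟩
  obtain ⟨θp, hpm, hpv⟩ := hplus
  obtain ⟨θm, hmm, hmv⟩ := hminus
  have hp : P + (θp : ℂ) * u = ζ := by
    have : P + (θp : ℂ) * u ∈ EllipseSet Z₁ Z₂ a ∩ pline P u := ⟨hpv, ⟨θp, rfl⟩⟩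
    rw [htan] at this; exact this
  have hm : P + (θm : ℂ) * u = ζ := by
    have : P + (θm : ℂ) * u ∈ EllipseSet Z₁ Z₂ a ∩ pline P u := ⟨hmv, ⟨θm, rfl⟩⟩
    rw [htan] at this; exact this
  have heq : θp = θm := by
    have h1 : (θp : ℂ) * u = (θm : ℂ) * u := add_left_cancel (hp.trans hm.symm)
    have h2 : (θp : ℂ) = (θm : ℂ) := mul_right_cancel₀ hu h1
    exact_mod_cast h2
  have hne1 : θp ≠ θ₀ := fun h => by
    rw [h] at hpv; simp only [hg] at hpv; linarith
  have hne2 : θm ≠ θ₀ := fun h => by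
    rw [h] at hmv; simp only [hg] at hmv; linarith
  have hb1 : θ₀ < θp := lt_of_le_of_ne hpm.1 (Ne.symm hne1)
  have hb2 : θm < θ₀ := lt_of_le_of_ne hmm.2 hne2
  linarith [heq]


/-- crossing point of a segment whose endpoints are on strictly opposite sides. -/
lemma cross_point {P u w₁ w₂ : ℂ} (hu : u ≠ 0) (h : lam P u w₁ * lam P u w₂ < 0) :
    ∃ s t : ℝ, 0 < s ∧ 0 < t ∧ s + t = 1 ∧ s • w₁ + t • w₂ ∈ pline P u := by
  set l₁ := lam P u w₁; set l₂ := lam P u w₂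
  have hne : l₁ - l₂ ≠ 0 := by
    rcases mul_neg_iff.mp h with ⟨h1, h2⟩ | ⟨h1, h2⟩ <;> intro hc <;> nlinarith
  have hq0 : 0 < l₁ / (l₁ - l₂) := by
    rcases mul_neg_iff.mp h with ⟨h1, h2⟩ | ⟨h1, h2⟩
    · exact div_pos h1 (by linarith)
    · exact div_pos_of_neg_of_neg h1 (by linarith)
  have hq1 : 0 < 1 - l₁ / (l₁ - l₂) := by
    have e : 1 - l₁ / (l₁ - l₂) = (-l₂) / (l₁ - l₂) := by field_simp; ring
    rw [e]
    rcases mul_neg_iff.mp h with ⟨h1, h2⟩ | ⟨h1, h2⟩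
    · exact div_pos (by linarith) (by linarith)
    · exact div_pos_of_neg_of_neg (by linarith) (by linarith)
  refine ⟨1 - l₁ / (l₁ - l₂), l₁ / (l₁ - l₂), hq1, hq0, by ring, ?_⟩
  apply mem_pline_of_lam hu
  rw [lam_combo P u w₁ w₂ _ _ (by ring)]
  field_simp
  ring
lemma fZ₁ (Z₁ Z₂ : ℂ) : dist Z₁ Z₁ + dist Z₁ Z₂ = dist Z₁ Z₂ := by simp
lemma fZ₂ (Z₁ Z₂ : ℂ) : dist Z₂ Z₁ + dist Z₂ Z₂ = dist Z₁ Z₂ := by simp [dist_comm]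

lemma lam_focus_ne {Z₁ Z₂ : ℂ} {a : ℝ} (hd : dist Z₁ Z₂ < 2 * a) {P u : ℂ} (hu : u ≠ 0)
    (hsupp : ∀ z ∈ pline P u, 2 * a ≤ dist z Z₁ + dist z Z₂) {w : ℂ}
    (hw : dist w Z₁ + dist w Z₂ < 2 * a) : lam P u w ≠ 0 := by
  intro hc
  have := hsupp w (mem_pline_of_lam hu hc)
  linarith

lemma same_side_foci {Z₁ Z₂ : ℂ} {a : ℝ} (hd : dist Z₁ Z₂ < 2 * a) {P u : ℂ} (hu : u ≠ 0)
    (hsupp : ∀ z ∈ pline P u, 2 * a ≤ dist z Z₁ + dist z Z₂) :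
    0 < lam P u Z₁ * lam P u Z₂ := by
  have h1 : lam P u Z₁ ≠ 0 := lam_focus_ne hd hu hsupp (by rw [fZ₁]; exact hd)
  have h2 : lam P u Z₂ ≠ 0 := lam_focus_ne hd hu hsupp (by rw [fZ₂]; exact hd)
  rcases lt_or_gt_of_ne (mul_ne_zero h1 h2) with h | h
  · exfalso
    obtain ⟨s, t, hs, ht, hst, hmem⟩ := cross_point hu h
    have hle := hsupp _ hmem
    have e1 := dist_combo_left Z₁ Z₂ (le_of_lt ht) hst
    have e2 := dist_combo_right Z₁ Z₂ (le_of_lt hs) hst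
    have : dist (s • Z₁ + t • Z₂) Z₁ + dist (s • Z₁ + t • Z₂) Z₂ = (t + s) * dist Z₁ Z₂ := by
      rw [e1, e2]; ring
    rw [this] at hle
    have : t + s = 1 := by linarith
    rw [this, one_mul] at hle
    linarith
  · exact h

/-- Reflection of w across the line through P with direction u. -/
def reflc (P u w : ℂ) : ℂ := P + u * conj (w - P) / conj u

lemma reflc_sub {P u : ℂ} (hu : u ≠ 0) (w z : ℂ) (hz : z ∈ pline P u) :
    z - reflc P u w = u * conj (z - w) / conj u := by
  obtain ⟨θ, rfl⟩ := hz
  have hcu : conj u ≠ 0 := by simpa using hu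
  rw [reflc, eq_div_iff hcu]
  simp only [map_sub, map_add, map_mul, Complex.conj_ofReal]
  field_simp
  ring
lemma dist_reflc {P u : ℂ} (hu : u ≠ 0) (w z : ℂ) (hz : z ∈ pline P u) :
    dist z (reflc P u w) = dist z w := by
  have h := reflc_sub hu w z hz
  have hcu : conj u ≠ 0 := by simpa using hu
  rw [dist_eq_norm, h, norm_div, norm_mul]
  rw [RCLike.norm_conj, RCLike.norm_conj]
  rw [mul_comm, mul_div_assoc, div_self (norm_ne_zero_iff.mpr hu), mul_one, dist_eq_norm]

lemma lam_reflc {P u : ℂ} (hu : u ≠ 0) (w : ℂ) : lam P u (reflc P u w) = - lam P u w := by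
  have hcu : conj u ≠ 0 := by simpa using hu
  unfold lam reflc
  rw [add_sub_cancel_left, div_mul_cancel₀ _ hcu]
  rw [show u * conj (w - P) = conj ((w - P) * conj u) from by
    rw [map_mul, Complex.conj_conj]; ring]
  simp
  ring

lemma tangent_pt_mem {Z₁ Z₂ : ℂ} {a : ℝ} {P u ζ : ℂ}
    (htan : EllipseSet Z₁ Z₂ a ∩ pline P u = {ζ}) :
    ζ ∈ EllipseSet Z₁ Z₂ a ∧ ζ ∈ pline P u := by
  have : ζ ∈ EllipseSet Z₁ Z₂ a ∩ pline P u := by rw [htan]; exact Set.mem_singleton ζ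
  exact this

lemma refl_dist {Z₁ Z₂ : ℂ} {a : ℝ} (hd : dist Z₁ Z₂ < 2 * a) {P u ζ : ℂ} (hu : u ≠ 0)
    (htan : EllipseSet Z₁ Z₂ a ∩ pline P u = {ζ}) :
    dist (reflc P u Z₁) Z₂ = 2 * a := by
  have hsupp := support hd hu htan
  obtain ⟨hζE, hζL⟩ := tangent_pt_mem htan
  set A := reflc P u Z₁ with hA
  have hss := same_side_foci hd hu hsupp
  have hcross : lam P u A * lam P u Z₂ < 0 := by
    rw [hA, lam_reflc hu]; nlinarith
  obtain ⟨s, t, hs, ht, hst, hmem⟩ := cross_point hu hcross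
  have e1 : dist (s • A + t • Z₂) A = t * dist A Z₂ := dist_combo_left A Z₂ ht.le hst
  have e2 : dist (s • A + t • Z₂) Z₂ = s * dist A Z₂ := dist_combo_right A Z₂ hs.le hst
  have e3 : dist (s • A + t • Z₂) Z₁ = dist (s • A + t • Z₂) A := by
    rw [hA, dist_reflc hu Z₁ _ hmem]
  have hge : 2 * a ≤ dist A Z₂ := by
    have h := hsupp _ hmem
    rw [e3, e1, e2] at h
    have e4 : t * dist A Z₂ + s * dist A Z₂ = dist A Z₂ := by
      rw [← add_mul, show t + s = 1 by linarith, one_mul]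
    linarith
  have hle : dist A Z₂ ≤ 2 * a := by
    have h1 : dist A Z₂ ≤ dist A ζ + dist ζ Z₂ := dist_triangle _ _ _
    have h2 : dist A ζ = dist ζ Z₁ := by
      rw [dist_comm, hA, dist_reflc hu Z₁ ζ hζL]
    have h3 : dist ζ Z₁ + dist ζ Z₂ = 2 * a := hζE
    linarith
  linarith

lemma zeta_ne_focus {Z₁ Z₂ : ℂ} {a : ℝ} (hd : dist Z₁ Z₂ < 2 * a) {ζ : ℂ}
    (hζE : ζ ∈ EllipseSet Z₁ Z₂ a) : ζ ≠ Z₁ ∧ ζ ≠ Z₂ := by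
  have h : dist ζ Z₁ + dist ζ Z₂ = 2 * a := hζE
  constructor <;> intro hc
  · rw [hc, dist_self, zero_add] at h; linarith
  · rw [hc, dist_self, add_zero, dist_comm] at h; linarith

lemma tangent_product {Z₁ Z₂ : ℂ} {a : ℝ} (hd : dist Z₁ Z₂ < 2 * a) {P u ζ : ℂ} (hu : u ≠ 0)
    (htan : EllipseSet Z₁ Z₂ a ∩ pline P u = {ζ}) :
    ∃ k : ℝ, k < 0 ∧ (Z₁ - ζ) * (Z₂ - ζ) = (k : ℂ) * u ^ 2 := by
  have hsupp := support hd hu htan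
  obtain ⟨hζE, hζL⟩ := tangent_pt_mem htan
  obtain ⟨hne1, hne2⟩ := zeta_ne_focus hd hζE
  set A := reflc P u Z₁ with hA
  have hAZ : dist A Z₂ = 2 * a := refl_dist hd hu htan
  have hfζ : dist ζ Z₁ + dist ζ Z₂ = 2 * a := hζE
  -- same ray
  have hxy : ‖(A - ζ) + (ζ - Z₂)‖ = ‖A - ζ‖ + ‖ζ - Z₂‖ := by
    have h1 : ‖A - ζ‖ = dist ζ Z₁ := by
      rw [← dist_eq_norm, dist_comm, dist_reflc hu Z₁ ζ hζL]
    have h2 : ‖ζ - Z₂‖ = dist ζ Z₂ := (dist_eq_norm ζ Z₂).symm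
    have h3 : ‖A - ζ + (ζ - Z₂)‖ = dist A Z₂ := by
      rw [show A - ζ + (ζ - Z₂) = A - Z₂ by ring, ← dist_eq_norm]
    rw [h1, h2, h3, hAZ, hfζ]
  have hx0 : A - ζ ≠ 0 := by
    intro hc
    have hAe : A = ζ := by linear_combination hc
    have h0 : dist ζ Z₁ = 0 := by
      rw [← dist_reflc hu Z₁ ζ hζL, ← hA, hAe, dist_self]
    exact hne1 (by rwa [dist_eq_zero] at h0)
  have hy0 : ζ - Z₂ ≠ 0 := sub_ne_zero.mpr hne2
  have hsr : SameRay ℝ (A - ζ) (ζ - Z₂) := sameRay_iff_norm_add.mpr hxy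
  obtain ⟨r₁, r₂, hr₁, hr₂, hr⟩ := hsr.exists_pos hx0 hy0
  set r := r₂ / r₁ with hrdef
  have hrpos : 0 < r := div_pos hr₂ hr₁
  have hAζ : A - ζ = (r : ℂ) * (ζ - Z₂) := by
    have h1 : (r₁ : ℂ) * (A - ζ) = (r₂ : ℂ) * (ζ - Z₂) := by
      rw [Complex.real_smul, Complex.real_smul] at hr
      exact hr
    have hr10 : (r₁ : ℂ) ≠ 0 := by exact_mod_cast hr₁.ne'
    rw [hrdef]
    push_cast
    field_simp
    linear_combination h1
  have hcu : conj u ≠ 0 := by simpa using hu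
  have hrefl : ζ - A = u * conj (ζ - Z₁) / conj u := by
    rw [hA]; exact reflc_sub hu Z₁ ζ hζL
  have h2 : u * conj (ζ - Z₁) = -((r : ℂ) * (ζ - Z₂)) * conj u := by
    rw [eq_div_iff hcu] at hrefl
    linear_combination -hrefl - conj u * hAζ
  have h3 := congrArg (starRingEnd ℂ) h2
  simp only [map_mul, map_neg, map_sub, Complex.conj_conj, Complex.conj_ofReal] at h3
  -- h3 : conj u * (ζ - Z₁) = -((r:ℂ) * (conj ζ - conj Z₂)) * u  (roughly)
  have hconj : conj u * (Z₁ - ζ) = (r : ℂ) * conj (ζ - Z₂) * u := by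
    simp only [map_sub] at h3 ⊢
    linear_combination -h3
  have hn2 : 0 < Complex.normSq (ζ - Z₂) := Complex.normSq_pos.mpr hy0
  have hnu : 0 < Complex.normSq u := Complex.normSq_pos.mpr hu
  refine ⟨-(r * Complex.normSq (ζ - Z₂) / Complex.normSq u), ?_, ?_⟩
  · have := div_pos (mul_pos hrpos hn2) hnu
    linarith
  · have hmc : (ζ - Z₂) * conj (ζ - Z₂) = ((Complex.normSq (ζ - Z₂) : ℝ) : ℂ) :=
      Complex.mul_conj _
    have hmcu : u * conj u = ((Complex.normSq u : ℝ) : ℂ) := Complex.mul_conj u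
    have hnsu : ((Complex.normSq u : ℝ) : ℂ) ≠ 0 := by exact_mod_cast hnu.ne'
    have hkc : ((-(r * Complex.normSq (ζ - Z₂) / Complex.normSq u) : ℝ) : ℂ)
        = -((r : ℂ) * ((Complex.normSq (ζ - Z₂) : ℝ) : ℂ) / ((Complex.normSq u : ℝ) : ℂ)) := by
      push_cast; ring
    rw [hkc]
    apply mul_right_cancel₀ hnsu
    have hstep : -((r : ℂ) * ((Complex.normSq (ζ - Z₂) : ℝ) : ℂ) / ((Complex.normSq u : ℝ) : ℂ))
        * u ^ 2 * ((Complex.normSq u : ℝ) : ℂ)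
        = -((r : ℂ) * ((Complex.normSq (ζ - Z₂) : ℝ) : ℂ)) * u ^ 2 := by
      field_simp
    rw [hstep]
    linear_combination ((Z₂ - ζ) * u) * hconj - ((Z₁ - ζ) * (Z₂ - ζ)) * hmcu
      - ((r : ℂ) * u ^ 2) * hmc

lemma im_mul_conj_self (z : ℂ) : (z * conj z).im = 0 := by
  rw [Complex.mul_conj]; exact Complex.ofReal_im _

lemma foci_inner {Z₁ Z₂ : ℂ} {a : ℝ} (hd : dist Z₁ Z₂ < 2 * a) {X Y W : ℂ}
    (hncI : ((Y - X) * conj (W - X)).im ≠ 0)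
    {ζ ζ' : ℂ}
    (hts : EllipseSet Z₁ Z₂ a ∩ pline X (Y - X) = {ζ})
    (hseg : ζ' ∈ segment ℝ Y W)
    (hts' : EllipseSet Z₁ Z₂ a ∩ pline Y (W - Y) = {ζ'}) :
    0 < ((Z₁ - X) * conj (Y - X)).im * ((W - X) * conj (Y - X)).im := by
  set u := Y - X with hu_def
  set w := W - Y with hw_def
  have hWX : W - X = w + u := by rw [hu_def, hw_def]; ring
  have hu : u ≠ 0 := by
    intro h; apply hncI; rw [h]; simp
  have hw : w ≠ 0 := by
    intro h
    apply hncI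
    have h2 : W - X = u := by rw [hWX, h]; ring
    rw [h2]
    exact im_mul_conj_self u
  -- the statement is about lam
  show 0 < lam X u Z₁ * lam X u W
  have hsupp := support hd hu hts
  have hsupp' := support hd hw hts'
  have hlamW : lam X u W ≠ 0 := by
    intro h
    obtain ⟨θ, hθ⟩ := mem_pline_of_lam hu h
    apply hncI
    rw [show W - X = (θ : ℂ) * u from by rw [hθ]; ring]
    rw [map_mul, Complex.conj_ofReal, show u * ((θ:ℂ) * conj u) = (θ:ℂ) * (u * conj u) from by ring,
      Complex.mul_conj, ← Complex.ofReal_mul]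
    exact Complex.ofReal_im _
  have hss := same_side_foci hd hu hsupp
  have hlamZ₁ : lam X u Z₁ ≠ 0 := by
    intro h; rw [h, zero_mul] at hss; exact lt_irrefl 0 hss
  by_contra hcon
  push_neg at hcon
  have hneg : lam X u Z₁ * lam X u W < 0 :=
    lt_of_le_of_ne hcon (mul_ne_zero hlamZ₁ hlamW)
  obtain ⟨sa, sb, hsa, hsb, hsab, hζ'c⟩ := hseg
  obtain ⟨hζ'E, hζ'L⟩ := tangent_pt_mem hts'
  have hfζ' : dist ζ' Z₁ + dist ζ' Z₂ = 2 * a := hζ'E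
  have hlamY : lam X u Y = 0 := by
    unfold lam; rw [← hu_def]; exact im_mul_conj_self u
  have hlamζ' : lam X u ζ' = sb * lam X u W := by
    rw [← hζ'c, lam_combo X u Y W sa sb hsab, hlamY]; ring
  have hge : 0 ≤ lam X u ζ' * lam X u Z₁ := by
    by_contra h'
    push_neg at h'
    obtain ⟨s', t', hs', ht', hst', hmem⟩ := cross_point hu h'
    have h2a := hsupp _ hmem
    have d1 : dist (s' • ζ' + t' • Z₁) Z₁ ≤ s' * dist ζ' Z₁ + t' * dist Z₁ Z₁ :=
      dist_combo_le ζ' Z₁ Z₁ hs'.le ht'.le hst'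
    have d2 : dist (s' • ζ' + t' • Z₁) Z₂ ≤ s' * dist ζ' Z₂ + t' * dist Z₁ Z₂ :=
      dist_combo_le ζ' Z₁ Z₂ hs'.le ht'.le hst'
    rw [dist_self] at d1
    have e5 : s' * dist ζ' Z₁ + s' * dist ζ' Z₂ = s' * (2 * a) := by rw [← mul_add, hfζ']
    have e6 : t' * dist Z₁ Z₂ < t' * (2 * a) := mul_lt_mul_of_pos_left hd ht'
    have e7 : s' * (2 * a) + t' * (2 * a) = 2 * a := by rw [← add_mul, hst']; ring
    linarith
  have hsb0 : sb = 0 := by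
    rw [hlamζ'] at hge
    nlinarith
  have hζ'Y : ζ' = Y := by
    rw [← hζ'c, hsb0, show sa = 1 by linarith]; simp
  have hYE : Y ∈ EllipseSet Z₁ Z₂ a := by rw [← hζ'Y]; exact hζ'E
  have hYL : Y ∈ pline X u := ⟨1, by rw [hu_def]; push_cast; ring⟩
  have hζYeq : ζ = Y := by
    have : Y ∈ EllipseSet Z₁ Z₂ a ∩ pline X u := ⟨hYE, hYL⟩
    rw [hts] at this
    exact this.symm
  obtain ⟨hYZ₁, hYZ₂⟩ := zeta_ne_focus hd hYE
  obtain ⟨k₃, hk₃, hk₃e⟩ := tangent_product hd hu hts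
  obtain ⟨k₁, hk₁, hk₁e⟩ := tangent_product hd hw hts'
  rw [hζYeq] at hk₃e
  rw [hζ'Y] at hk₁e
  have H : (k₃ : ℂ) * u ^ 2 = (k₁ : ℂ) * w ^ 2 := by rw [← hk₃e, ← hk₁e]
  -- u is a real multiple of w : contradiction
  have master : ∀ c : ℝ, u ≠ (c : ℂ) * w := by
    intro c hcase
    apply hncI
    rw [hWX, hcase]
    have e2 : ((c : ℂ) * w) * conj (w + (c : ℂ) * w) = ((c : ℂ) + (c : ℂ) ^ 2) * (w * conj w) := by
      rw [map_add, map_mul, Complex.conj_ofReal]; ring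
    rw [e2, Complex.mul_conj, show ((c : ℂ) + (c : ℂ) ^ 2) * ((Complex.normSq w : ℝ) : ℂ)
      = (((c + c ^ 2) * Complex.normSq w : ℝ) : ℂ) from by push_cast; ring]
    exact Complex.ofReal_im _
  have hρ : 0 < k₁ / k₃ := div_pos_of_neg_of_neg hk₁ hk₃
  set s := Real.sqrt (k₁ / k₃) with hsdef
  have hs2 : s ^ 2 = k₁ / k₃ := Real.sq_sqrt hρ.le
  have hks : k₃ * s ^ 2 = k₁ := by rw [hs2, mul_comm]; exact div_mul_cancel₀ k₁ hk₃.ne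
  have hksC : (k₃ : ℂ) * ((s : ℝ) : ℂ) ^ 2 = (k₁ : ℂ) := by exact_mod_cast congrArg Complex.ofReal hks
  have factored : (k₃ : ℂ) * ((u - (s : ℂ) * w) * (u + (s : ℂ) * w)) = 0 := by
    linear_combination H - w ^ 2 * hksC
  have hk₃C : (k₃ : ℂ) ≠ 0 := by exact_mod_cast hk₃.ne
  rcases mul_eq_zero.mp factored with h | h
  · exact hk₃C h
  rcases mul_eq_zero.mp h with h' | h'
  · exact master s (by linear_combination h')
  · exact master (-s) (by push_cast; linear_combination h')

lemma planar_dec (c u v : ℂ) :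
    (((u * conj v).im : ℝ) : ℂ) * c
      = (((c * conj v).im : ℝ) : ℂ) * u - (((c * conj u).im : ℝ) : ℂ) * v := by
  apply Complex.ext <;>
    simp [Complex.mul_re, Complex.mul_im, Complex.conj_re, Complex.conj_im] <;> ring

lemma vertex_real {Z₁ Z₂ V u v : ℂ} {a : ℝ}
    (hA : dist (reflc V u Z₁) Z₂ = 2 * a) (hB : dist (reflc V v Z₁) Z₂ = 2 * a)
    (hu : u ≠ 0) (hv : v ≠ 0) (hindep : (u * conj v).im ≠ 0) :
    ((Z₁ - V) * (Z₂ - V) * conj (u * v)).im = 0 := by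
  set c := Z₁ - V with hc_def
  set d := Z₂ - V with hd_def
  have hcu : conj u ≠ 0 := by simpa using hu
  have hcv : conj v ≠ 0 := by simpa using hv
  have h1 : Complex.normSq (reflc V u Z₁ - Z₂) = Complex.normSq (reflc V v Z₁ - Z₂) := by
    rw [← Complex.sq_norm, ← Complex.sq_norm, ← Complex.dist_eq, ← Complex.dist_eq, hA, hB]
  have Hc : (reflc V u Z₁ - Z₂) * conj (reflc V u Z₁ - Z₂)
      = (reflc V v Z₁ - Z₂) * conj (reflc V v Z₁ - Z₂) := by
    rw [Complex.mul_conj, Complex.mul_conj]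
    exact_mod_cast congrArg Complex.ofReal h1
  have eA : reflc V u Z₁ - Z₂ = (u * conj c - d * conj u) / conj u := by
    rw [eq_div_iff hcu, hc_def, hd_def]; unfold reflc; field_simp; ring_nf
  have eB : reflc V v Z₁ - Z₂ = (v * conj c - d * conj v) / conj v := by
    rw [eq_div_iff hcv, hc_def, hd_def]; unfold reflc; field_simp; ring_nf
  rw [eA, eB] at Hc
  simp only [map_div₀, map_sub, map_mul, Complex.conj_conj] at Hc
  rw [div_mul_div_comm, div_mul_div_comm, div_eq_div_iff (mul_ne_zero hcu hu) (mul_ne_zero hcv hv)] at Hc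
  have key : (u * conj v - conj u * v) * (conj c * conj d * (u * v) - c * d * (conj u * conj v)) = 0 := by
    linear_combination -Hc
  have hfac : u * conj v - conj u * v ≠ 0 := by
    intro h0
    apply hindep
    have h1' := congrArg Complex.im h0
    rw [Complex.sub_im, show conj u * v = conj (u * conj v) from by
      rw [map_mul, Complex.conj_conj], Complex.conj_im] at h1'
    simp only [Complex.zero_im, sub_neg_eq_add] at h1'
    linarith
  have h2 : conj c * conj d * (u * v) - c * d * (conj u * conj v) = 0 :=
    (mul_eq_zero.mp key).resolve_left hfac
  have h3 : conj (c * d * conj (u * v)) = c * d * conj (u * v) := by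
    simp only [map_mul, Complex.conj_conj]
    linear_combination h2
  exact Complex.conj_eq_iff_im.mp h3

set_option maxHeartbeats 1000000 in
lemma vertex_t {c d u v : ℂ}
    (him : (c * d * conj (u * v)).im = 0)
    (hp : 0 < (c * conj v).im * (u * conj v).im)
    (hq : 0 < (c * conj u).im * (v * conj u).im)
    (hp' : 0 < (d * conj v).im * (u * conj v).im)
    (hq' : 0 < (d * conj u).im * (v * conj u).im)
    (hY : (u * conj v).im ≠ 0) :
    ∃ t : ℝ, 0 < t ∧ (t : ℂ) * (u * v) = c * d := by
  have hu : u ≠ 0 := by rintro rfl; simp at hY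
  have hv : v ≠ 0 := by rintro rfl; simp at hY
  set α := (c * conj v).im with hα
  set β := (c * conj u).im with hβ
  set α' := (d * conj v).im with hα'
  set β' := (d * conj u).im with hβ'
  have hcv_dec := planar_dec c u v
  have hdv_dec := planar_dec d u v
  have hmC : u * conj u = ((Complex.normSq u : ℝ) : ℂ) := Complex.mul_conj u
  have hnC : v * conj v = ((Complex.normSq v : ℝ) : ℂ) := Complex.mul_conj v
  set m := Complex.normSq u with hm_def
  set n := Complex.normSq v with hn_def
  have hm0 : 0 < m := Complex.normSq_pos.mpr hu
  have hn0 : 0 < n := Complex.normSq_pos.mpr hv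
  set S : ℂ := u * conj v with hS_def
  set S' : ℂ := v * conj u with hS'_def
  set Y := S.im with hYdef
  set X := S.re with hXdef
  have hvu_im : S'.im = -Y := by
    rw [hYdef, hS'_def, hS_def, show v * conj u = conj (u * conj v) from by
      rw [map_mul, Complex.conj_conj]; ring, Complex.conj_im]
  have hvu_re : S'.re = X := by
    rw [hXdef, hS'_def, hS_def, show v * conj u = conj (u * conj v) from by
      rw [map_mul, Complex.conj_conj]; ring, Complex.conj_re]
  have hXY : X ^ 2 + Y ^ 2 = m * n := by
    have h := Complex.normSq_mul u (conj v)
    rw [Complex.normSq_conj] at h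
    rw [Complex.normSq_apply] at h
    rw [hXdef, hYdef, hm_def, hn_def, hS_def]; nlinarith [h]
  -- main identity
  have Hid : ((Y ^ 2 : ℝ) : ℂ) * (c * d * (conj u * conj v))
      = ((α * α' * m : ℝ) : ℂ) * S + ((β * β' * n : ℝ) : ℂ) * S'
        - (((α * β' + α' * β) * (m * n) : ℝ) : ℂ) := by
    rw [hS_def, hS'_def]
    push_cast
    linear_combination (((Y : ℝ) : ℂ) * d * (conj u * conj v)) * hcv_dec
      + ((((α : ℝ) : ℂ) * u - ((β : ℝ) : ℂ) * v) * (conj u * conj v)) * hdv_dec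
      + (((α : ℝ) : ℂ) * ((α' : ℝ) : ℂ) * (u * conj v)) * hmC
      + (((β : ℝ) : ℂ) * ((β' : ℝ) : ℂ) * (v * conj u)) * hnC
      - ((((α : ℝ) : ℂ) * ((β' : ℝ) : ℂ) + ((α' : ℝ) : ℂ) * ((β : ℝ) : ℂ)) * (v * conj v)) * hmC
      - ((((α : ℝ) : ℂ) * ((β' : ℝ) : ℂ) + ((α' : ℝ) : ℂ) * ((β : ℝ) : ℂ)) * ((m : ℝ) : ℂ)) * hnC
  set T := c * d * (conj u * conj v) with hT_def
  have hTim : T.im = 0 := by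
    rw [hT_def, show conj u * conj v = conj (u * v) from (map_mul (starRingEnd ℂ) u v).symm]
    exact him
  have hre := congrArg Complex.re Hid
  have him2 := congrArg Complex.im Hid
  simp only [Complex.mul_re, Complex.mul_im, Complex.add_re, Complex.add_im, Complex.sub_re,
    Complex.sub_im, Complex.ofReal_re, Complex.ofReal_im, zero_mul, mul_zero, sub_zero,
    zero_sub, zero_add, add_zero, neg_zero] at hre him2
  rw [hTim] at him2
  rw [hvu_re, ← hXdef] at hre
  rw [hvu_im, ← hYdef] at him2
  -- him2 : 0 = α α' m Y + β β' n (-Y)  (after mul_zero etc.)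
  have heq : α * α' * m = β * β' * n := by
    have h2 : (α * α' * m) * Y = (β * β' * n) * Y := by linarith [him2]
    exact mul_right_cancel₀ hY h2
  -- positivity of auxiliary quantities
  have hY2 : 0 < Y ^ 2 := by positivity
  have hαα' : 0 < α * α' := by nlinarith [mul_pos hp hp', hY2]
  rw [hvu_im] at hq hq'
  have hαβ' : α * β' < 0 := by nlinarith [mul_pos hp hq', hY2]
  have hα'β : α' * β < 0 := by nlinarith [mul_pos hp' hq, hY2]
  set K := -(α * β' + α' * β) with hK_def
  have hK : 0 < K := by rw [hK_def]; linarith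
  have key3 : K ^ 2 * n ^ 2 = (α * β' - α' * β) ^ 2 * n ^ 2 + 4 * (α * α') ^ 2 * (m * n) := by
    rw [hK_def]; linear_combination (-(4 * α * α' * n)) * heq
  have hG : 0 < 2 * (α * α') * m * X + K * (m * n) := by
    rcases le_or_gt 0 X with hX | hX
    · have h1 : 0 ≤ 2 * (α * α') * m * X := by positivity
      have h2 : 0 < K * (m * n) := mul_pos hK (mul_pos hm0 hn0)
      linarith
    · have hX2 : X ^ 2 < m * n := by nlinarith [hXY, hY2]
      have e1 : (2 * (α * α') * (-X)) ^ 2 = 4 * (α * α') ^ 2 * X ^ 2 := by ring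
      have e2 : 4 * (α * α') ^ 2 * X ^ 2 < 4 * (α * α') ^ 2 * (m * n) := by
        apply mul_lt_mul_of_pos_left hX2
        positivity
      have e3 : (K * n) ^ 2 = (α * β' - α' * β) ^ 2 * n ^ 2 + 4 * (α * α') ^ 2 * (m * n) := by
        rw [show (K * n) ^ 2 = K ^ 2 * n ^ 2 by ring, key3]
      have e4 : (0:ℝ) ≤ (α * β' - α' * β) ^ 2 * n ^ 2 := by positivity
      have h5 : (2 * (α * α') * (-X)) ^ 2 < (K * n) ^ 2 := by linarith
      have h6 : 0 < K * n := mul_pos hK hn0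
      have h7 : 0 < 2 * (α * α') * (-X) := by
        have : 0 < -X := by linarith
        positivity
      have h8 : 2 * (α * α') * (-X) < K * n := by
        by_contra hcon
        push_neg at hcon
        have := pow_le_pow_left₀ h6.le hcon 2
        linarith
      have h9 : 0 < 2 * (α * α') * X + K * n := by linarith
      have h10 : 0 < m * (2 * (α * α') * X + K * n) := mul_pos hm0 h9
      have e5 : m * (2 * (α * α') * X + K * n) = 2 * (α * α') * m * X + K * (m * n) := by ring
      linarith
  -- conclude T.re > 0
  have hTre : 0 < T.re := by
    have e2 : β * β' * n * X = α * α' * m * X := by rw [← heq]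
    rw [hK_def] at hG
    have e3 : 0 < Y ^ 2 * T.re := by linarith [hre]
    by_contra hcon
    push_neg at hcon
    have := mul_nonpos_of_nonneg_of_nonpos hY2.le hcon
    linarith
  -- construct t
  have huv : u * v ≠ 0 := mul_ne_zero hu hv
  have hcuv : conj (u * v) ≠ 0 := by simpa using huv
  have hmn0 : m * n ≠ 0 := (mul_pos hm0 hn0).ne'
  refine ⟨T.re / (m * n), div_pos hTre (mul_pos hm0 hn0), ?_⟩
  apply mul_right_cancel₀ hcuv
  have hnsuv : Complex.normSq (u * v) = m * n := by
    rw [Complex.normSq_mul, hm_def, hn_def]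
  have e1 : ((T.re / (m * n) : ℝ) : ℂ) * (u * v) * conj (u * v) = ((T.re : ℝ) : ℂ) := by
    rw [mul_assoc, Complex.mul_conj, hnsuv, ← Complex.ofReal_mul, div_mul_cancel₀ _ hmn0]
  rw [e1]
  have hT : T = ((T.re : ℝ) : ℂ) := Complex.ext rfl (by simp [hTim])
  rw [show conj (u * v) = conj u * conj v from map_mul (starRingEnd ℂ) u v, ← hT_def]
  exact hT.symm

lemma EllipseSet_comm (Z₁ Z₂ : ℂ) (a : ℝ) : EllipseSet Z₂ Z₁ a = EllipseSet Z₁ Z₂ a := by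
  ext z
  simp only [EllipseSet, mem_setOf_eq]
  constructor <;> intro h <;> linarith

lemma collinear_triple {z₁ z₂ z₃ : ℂ} (h : ((z₂ - z₁) * conj (z₃ - z₁)).im = 0) :
    Collinear ℝ ({z₁, z₂, z₃} : Set ℂ) := by
  rcases eq_or_ne z₂ z₁ with h21 | h21
  · subst h21
    rw [Set.insert_comm, Set.insert_idem]
    exact collinear_pair ℝ _ _
  · have hu : z₂ - z₁ ≠ 0 := sub_ne_zero.mpr h21
    -- z₃ = z₁ + θ (z₂ - z₁)
    have h' : ((z₃ - z₁) * conj (z₂ - z₁)).im = 0 := by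
      rw [show (z₃ - z₁) * conj (z₂ - z₁) = conj ((z₂ - z₁) * conj (z₃ - z₁)) from by
        rw [map_mul, Complex.conj_conj]; ring, Complex.conj_im, h, neg_zero]
    have hns : (Complex.normSq (z₂ - z₁) : ℂ) ≠ 0 := by
      simpa using (Complex.normSq_pos.mpr hu).ne'
    set θ := ((z₃ - z₁) * conj (z₂ - z₁)).re / Complex.normSq (z₂ - z₁) with hθ
    have hz₃ : z₃ = z₁ + (θ : ℂ) * (z₂ - z₁) := by
      have h1 : ((z₃ - z₁) * conj (z₂ - z₁)) = ((((z₃ - z₁) * conj (z₂ - z₁)).re : ℝ) : ℂ) := by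
        apply Complex.ext
        · simp
        · simpa using h'
      have h2 : (z₃ - z₁) * ((Complex.normSq (z₂ - z₁) : ℝ) : ℂ)
          = ((((z₃ - z₁) * conj (z₂ - z₁)).re : ℝ) : ℂ) * (z₂ - z₁) := by
        rw [← Complex.mul_conj (z₂ - z₁), ← mul_assoc, ← h1]
        ring
      rw [hθ]
      push_cast
      rw [div_mul_eq_mul_div, ← h2, mul_div_assoc, div_self hns, mul_one]
      ring
    rw [collinear_iff_exists_forall_eq_smul_vadd]
    refine ⟨z₁, z₂ - z₁, ?_⟩
    rintro p (rfl | rfl | rfl)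
    · exact ⟨0, by simp⟩
    · exact ⟨1, by rw [one_smul, vadd_eq_add]; ring⟩
    · exact ⟨θ, by rw [Complex.real_smul, vadd_eq_add, hz₃]; ring⟩

lemma imswap (w x : ℂ) : (w * conj x).im = -((x * conj w).im) := by
  rw [show w * conj x = conj (x * conj w) from by rw [map_mul, Complex.conj_conj]; ring,
    Complex.conj_im]

lemma tri_cross (p q r : ℂ) :
    ((q - p) * conj (r - p)).im = ((r - q) * conj (p - q)).im := by
  simp only [Complex.mul_im, Complex.sub_re, Complex.sub_im, Complex.conj_re, Complex.conj_im]
  ring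


end Marden

open Marden

/-- **converse of Marden's theorem.** If a non-circular ellipse with foci
`Z₁, Z₂` is tangent to the three segments joining the distinct noncollinear points
`z₁, z₂, z₃`, then there exist `t₁, t₂, t₃` with `t₁t₂t₃ > 0` and `t₁ + t₂ + t₃ = 1` such
that the zeros of `F(z) = t₁/(z − z₁) + t₂/(z − z₂) + t₃/(z − z₃)` (the roots of its monic
quadratic numerator) are exactly `Z₁` and `Z₂`. -/
theorem marden_converse
    (z₁ z₂ z₃ : ℂ) (hnc : ¬ Collinear ℝ ({z₁, z₂, z₃} : Set ℂ))
    (E : Set ℂ) (Z₁ Z₂ : ℂ) (a : ℝ)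
    (hE : IsEllipse E Z₁ Z₂ a) (hncirc : Z₁ ≠ Z₂)
    (h₁ : TangentToSide E z₂ z₃)
    (h₂ : TangentToSide E z₁ z₃)
    (h₃ : TangentToSide E z₁ z₂) :
    ∃ t₁ t₂ t₃ : ℝ, 0 < t₁ * t₂ * t₃ ∧ t₁ + t₂ + t₃ = 1 ∧
      ∀ z : ℂ,
        (t₁ : ℂ) * (z - z₂) * (z - z₃) + (t₂ : ℂ) * (z - z₁) * (z - z₃) +
            (t₃ : ℂ) * (z - z₁) * (z - z₂) =
          (z - Z₁) * (z - Z₂) := by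

  obtain ⟨hd, hEeq⟩ := hE
  subst hEeq
  obtain ⟨ζ₁, hζ₁seg, hts₁⟩ := h₁
  obtain ⟨ζ₂, hζ₂seg, hts₂⟩ := h₂
  obtain ⟨ζ₃, hζ₃seg, hts₃⟩ := h₃
  -- noncollinearity criteria
  have n1 : ((z₂ - z₁) * conj (z₃ - z₁)).im ≠ 0 := fun h => hnc (collinear_triple h)
  have n2 : ((z₃ - z₁) * conj (z₂ - z₁)).im ≠ 0 := by
    rw [imswap]; exact neg_ne_zero.mpr n1
  have en3 : ((z₃ - z₂) * conj (z₁ - z₂)).im = ((z₂ - z₁) * conj (z₃ - z₁)).im :=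
    (tri_cross z₁ z₂ z₃).symm
  have n3 : ((z₃ - z₂) * conj (z₁ - z₂)).im ≠ 0 := by rw [en3]; exact n1
  have n4 : ((z₁ - z₂) * conj (z₃ - z₂)).im ≠ 0 := by
    rw [imswap]; exact neg_ne_zero.mpr n3
  have en5 : ((z₁ - z₃) * conj (z₂ - z₃)).im = ((z₃ - z₂) * conj (z₁ - z₂)).im :=
    (tri_cross z₂ z₃ z₁).symm
  have n6 : ((z₁ - z₃) * conj (z₂ - z₃)).im ≠ 0 := by rw [en5]; exact n3
  have n5 : ((z₂ - z₃) * conj (z₁ - z₃)).im ≠ 0 := by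
    rw [imswap]; exact neg_ne_zero.mpr n6
  -- direction nonvanishing
  have h21 : z₂ - z₁ ≠ 0 := by intro h; apply n1; rw [h]; simp
  have h31 : z₃ - z₁ ≠ 0 := by intro h; apply n1; rw [h]; simp
  have h32 : z₃ - z₂ ≠ 0 := by intro h; apply n3; rw [h]; simp
  have h12 : z₁ - z₂ ≠ 0 := fun h => h21 (by linear_combination -h)
  have h13 : z₁ - z₃ ≠ 0 := fun h => h31 (by linear_combination -h)
  have h23 : z₂ - z₃ ≠ 0 := fun h => h32 (by linear_combination -h)
  -- tangency in pline form
  have hts₁a : EllipseSet Z₁ Z₂ a ∩ pline z₂ (z₃ - z₂) = {ζ₁} := by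
    rw [← lineThrough_eq_pline]; exact hts₁
  have hts₁b : EllipseSet Z₁ Z₂ a ∩ pline z₃ (z₂ - z₃) = {ζ₁} := by
    rw [← lineThrough_eq_pline, lineThrough_comm]; exact hts₁
  have hts₂a : EllipseSet Z₁ Z₂ a ∩ pline z₁ (z₃ - z₁) = {ζ₂} := by
    rw [← lineThrough_eq_pline]; exact hts₂
  have hts₂b : EllipseSet Z₁ Z₂ a ∩ pline z₃ (z₁ - z₃) = {ζ₂} := by
    rw [← lineThrough_eq_pline, lineThrough_comm]; exact hts₂
  have hts₃a : EllipseSet Z₁ Z₂ a ∩ pline z₁ (z₂ - z₁) = {ζ₃} := by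
    rw [← lineThrough_eq_pline]; exact hts₃
  have hts₃b : EllipseSet Z₁ Z₂ a ∩ pline z₂ (z₁ - z₂) = {ζ₃} := by
    rw [← lineThrough_eq_pline, lineThrough_comm]; exact hts₃
  -- swapped-focus versions
  have hd' : dist Z₂ Z₁ < 2 * a := by rwa [dist_comm]
  have hsw := EllipseSet_comm Z₁ Z₂ a
  have hts₁a' : EllipseSet Z₂ Z₁ a ∩ pline z₂ (z₃ - z₂) = {ζ₁} := by rw [hsw]; exact hts₁a
  have hts₁b' : EllipseSet Z₂ Z₁ a ∩ pline z₃ (z₂ - z₃) = {ζ₁} := by rw [hsw]; exact hts₁b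
  have hts₂a' : EllipseSet Z₂ Z₁ a ∩ pline z₁ (z₃ - z₁) = {ζ₂} := by rw [hsw]; exact hts₂a
  have hts₂b' : EllipseSet Z₂ Z₁ a ∩ pline z₃ (z₁ - z₃) = {ζ₂} := by rw [hsw]; exact hts₂b
  have hts₃a' : EllipseSet Z₂ Z₁ a ∩ pline z₁ (z₂ - z₁) = {ζ₃} := by rw [hsw]; exact hts₃a
  have hts₃b' : EllipseSet Z₂ Z₁ a ∩ pline z₂ (z₁ - z₂) = {ζ₃} := by rw [hsw]; exact hts₃b
  -- segment symm
  have hζ₁seg' : ζ₁ ∈ segment ℝ z₃ z₂ := by rw [segment_symm]; exact hζ₁seg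
  have hζ₂seg' : ζ₂ ∈ segment ℝ z₃ z₁ := by rw [segment_symm]; exact hζ₂seg
  have hζ₃seg' : ζ₃ ∈ segment ℝ z₂ z₁ := by rw [segment_symm]; exact hζ₃seg
  -- foci inside the triangle : 12 instances
  have A1q := foci_inner hd n1 hts₃a hζ₁seg hts₁a
  have A1p := foci_inner hd n2 hts₂a hζ₁seg' hts₁b
  have A2p := foci_inner hd n3 hts₁a hζ₂seg' hts₂b
  have A2q := foci_inner hd n4 hts₃b hζ₂seg hts₂a
  have A3p := foci_inner hd n5 hts₁b hζ₃seg' hts₃b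
  have A3q := foci_inner hd n6 hts₂b hζ₃seg hts₃a
  have B1q := foci_inner hd' n1 hts₃a' hζ₁seg hts₁a'
  have B1p := foci_inner hd' n2 hts₂a' hζ₁seg' hts₁b'
  have B2p := foci_inner hd' n3 hts₁a' hζ₂seg' hts₂b'
  have B2q := foci_inner hd' n4 hts₃b' hζ₂seg hts₂a'
  have B3p := foci_inner hd' n5 hts₁b' hζ₃seg' hts₃b'
  have B3q := foci_inner hd' n6 hts₂b' hζ₃seg hts₃a'
  -- reflections and reality
  have hA₁ := refl_dist hd h21 hts₃a
  have hB₁ := refl_dist hd h31 hts₂a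
  have him₁ := vertex_real hA₁ hB₁ h21 h31 n1
  have hA₂ := refl_dist hd h12 hts₃b
  have hB₂ := refl_dist hd h32 hts₁a
  have him₂ := vertex_real hA₂ hB₂ h12 h32 n4
  have hA₃ := refl_dist hd h13 hts₂b
  have hB₃ := refl_dist hd h23 hts₁b
  have him₃ := vertex_real hA₃ hB₃ h13 h23 n6
  -- coefficients
  obtain ⟨t₁, ht₁pos, ht₁eq⟩ := vertex_t him₁ A1p A1q B1p B1q n1
  obtain ⟨t₂, ht₂pos, ht₂eq⟩ := vertex_t him₂ A2p A2q B2p B2q n4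
  obtain ⟨t₃, ht₃pos, ht₃eq⟩ := vertex_t him₃ A3p A3q B3p B3q n6
  -- algebraic finish
  have e₁ : (t₁ : ℂ) * ((z₁ - z₂) * (z₁ - z₃)) = (z₁ - Z₁) * (z₁ - Z₂) := by
    linear_combination ht₁eq
  have e₂ : (t₂ : ℂ) * ((z₂ - z₁) * (z₂ - z₃)) = (z₂ - Z₁) * (z₂ - Z₂) := by
    linear_combination ht₂eq
  have e₃ : (t₃ : ℂ) * ((z₃ - z₁) * (z₃ - z₂)) = (z₃ - Z₁) * (z₃ - Z₂) := by
    linear_combination ht₃eq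
  have hN : ((z₁ - z₂) * (z₁ - z₃)) * ((z₂ - z₁) * (z₂ - z₃)) * ((z₃ - z₁) * (z₃ - z₂)) ≠ 0 := by
    apply mul_ne_zero (mul_ne_zero (mul_ne_zero h12 h13) (mul_ne_zero h21 h23))
      (mul_ne_zero h31 h32)
  have hsumC : (t₁ : ℂ) + (t₂ : ℂ) + (t₃ : ℂ) = 1 := by
    apply mul_right_cancel₀ hN
    linear_combination ((z₂ - z₁) * (z₂ - z₃) * ((z₃ - z₁) * (z₃ - z₂))) * e₁
      + ((z₁ - z₂) * (z₁ - z₃) * ((z₃ - z₁) * (z₃ - z₂))) * e₂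
      + ((z₁ - z₂) * (z₁ - z₃) * ((z₂ - z₁) * (z₂ - z₃))) * e₃
  have hlin : (t₁ : ℂ) * (z₂ + z₃) + (t₂ : ℂ) * (z₁ + z₃) + (t₃ : ℂ) * (z₁ + z₂) = Z₁ + Z₂ := by
    apply mul_right_cancel₀ hN
    linear_combination ((z₂ + z₃) * ((z₂ - z₁) * (z₂ - z₃) * ((z₃ - z₁) * (z₃ - z₂)))) * e₁
      + ((z₁ + z₃) * ((z₁ - z₂) * (z₁ - z₃) * ((z₃ - z₁) * (z₃ - z₂)))) * e₂
      + ((z₁ + z₂) * ((z₁ - z₂) * (z₁ - z₃) * ((z₂ - z₁) * (z₂ - z₃)))) * e₃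
  have hconst : (t₁ : ℂ) * (z₂ * z₃) + (t₂ : ℂ) * (z₁ * z₃) + (t₃ : ℂ) * (z₁ * z₂) = Z₁ * Z₂ := by
    apply mul_right_cancel₀ hN
    linear_combination ((z₂ * z₃) * ((z₂ - z₁) * (z₂ - z₃) * ((z₃ - z₁) * (z₃ - z₂)))) * e₁
      + ((z₁ * z₃) * ((z₁ - z₂) * (z₁ - z₃) * ((z₃ - z₁) * (z₃ - z₂)))) * e₂
      + ((z₁ * z₂) * ((z₁ - z₂) * (z₁ - z₃) * ((z₂ - z₁) * (z₂ - z₃)))) * e₃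
  refine ⟨t₁, t₂, t₃, mul_pos (mul_pos ht₁pos ht₂pos) ht₃pos, by exact_mod_cast hsumC, ?_⟩
  intro z
  linear_combination (z ^ 2) * hsumC - z * hlin + hconst
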